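/- If f : P(ω) → [0,1] is a medial limit, then the filter F = {x ⊆ ℕ : f(x) = 1}, viewed as a subset of the Cantor space P(ω), does not have the property of Baire; in particular, F is nonmeager. -/

import Mathlib

open MeasureTheory Set

/-- Identify a subset of ℕ with a point of the Cantor space `ℕ → Bool`. -/
noncomputable def toCantor (x : Set ℕ) : ℕ → Bool :=
  fun n => @decide (n ∈ x) (Classical.dec _)

/-- A subset of a topological space is universally measurable if it is measurable with
respect to (the completion of) every σ-finite Borel measure on the space. -/
def UMSet {X : Type*} [TopologicalSpace X] (A : Set X) : Prop :=
  letI : MeasurableSpace X := borel X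
  ∀ μ : Measure X, SigmaFinite μ → NullMeasurableSet A μ

/-- A medial limit: a universally measurable function `𝒫(ω) → [0,1]` which is finitely
additive for disjoint sets, sends singletons to `0` and `ω` to `1`. -/
def IsMedialLimit (f : Set ℕ → ℝ) : Prop :=
  (∀ x : Set ℕ, f x ∈ Set.Icc (0 : ℝ) 1) ∧
  (∀ U : Set ℝ, IsOpen U → UMSet (toCantor '' (f ⁻¹' U))) ∧
  (∀ x y : Set ℕ, Disjoint x y → f (x ∪ y) = f x + f y) ∧
  (∀ n : ℕ, f {n} = 0) ∧
  f Set.univ = 1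

/-- A set has the property of Baire if its symmetric difference with some open set
is meager. -/
def HasBaireProperty {X : Type*} [TopologicalSpace X] (A : Set X) : Prop :=
  ∃ U : Set X, IsOpen U ∧ IsMeagre (symmDiff A U)

namespace MedialAux


lemma toCantor_eq_true {x : Set ℕ} {n : ℕ} : toCantor x n = true ↔ n ∈ x := by
  simp [toCantor]

section fprops

variable {f : Set ℕ → ℝ}
  (h0 : ∀ x, 0 ≤ f x) (h1 : ∀ x, f x ≤ 1)
  (hadd : ∀ x y : Set ℕ, Disjoint x y → f (x ∪ y) = f x + f y)
  (hsing : ∀ n : ℕ, f {n} = 0)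

include hadd

lemma f_empty : f ∅ = 0 := by
  have := hadd ∅ ∅ (disjoint_bot_left)
  simp at this; linarith

include hsing in
lemma f_finite {s : Set ℕ} (hs : s.Finite) : f s = 0 := by
  refine Set.Finite.induction_on (motive := fun s _ => f s = 0) s hs (f_empty hadd) ?_
  intro a s ha _ ih
  have : f (insert a s) = f {a} + f s := by
    rw [← singleton_union]
    exact hadd _ _ (by simpa [Set.disjoint_singleton_left] using ha)
  rw [this, hsing, ih]; ring

lemma f_split (x y : Set ℕ) : f x = f (x ∩ y) + f (x \ y) := by
  have := hadd (x ∩ y) (x \ y) (Set.disjoint_of_subset inter_subset_right subset_rfl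
    disjoint_sdiff_right)
  rwa [Set.inter_union_diff] at this

include h0 in
lemma f_mono {x y : Set ℕ} (h : x ⊆ y) : f x ≤ f y := by
  have := hadd x (y \ x) disjoint_sdiff_right
  rw [Set.union_diff_cancel h] at this
  have := h0 (y \ x); linarith

lemma f_inclexcl (x y : Set ℕ) : f (x ∪ y) + f (x ∩ y) = f x + f y := by
  have h2 : f (x ∪ y) = f (x \ y) + f y := by
    have := hadd (x \ y) y disjoint_sdiff_left
    rwa [Set.diff_union_self] at this
  have h3 := f_split hadd x y
  linarith

include hsing in
lemma f_congr_finite {x y : Set ℕ} (h : (symmDiff x y).Finite) : f x = f y := by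
  have hx : f x = f (x ∩ y) := by
    have h3 := f_split hadd x y
    have : f (x \ y) = 0 := f_finite hadd hsing (h.subset (by
      intro i hi; exact Or.inl hi))
    linarith
  have hy : f y = f (y ∩ x) := by
    have h3 := f_split hadd y x
    have : f (y \ x) = 0 := f_finite hadd hsing (h.subset (by
      intro i hi; exact Or.inr hi))
    linarith
  rw [hx, hy, Set.inter_comm]

end fprops

/-! ### Cantor space topology -/

/-- Basic cylinder: functions agreeing with `z` below `m`. -/
def Cyl (z : ℕ → Bool) (m : ℕ) : Set (ℕ → Bool) := {w | ∀ i < m, w i = z i}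

lemma self_mem_Cyl (z : ℕ → Bool) (m : ℕ) : z ∈ Cyl z m := fun _ _ => rfl

lemma isOpen_Cyl (z : ℕ → Bool) (m : ℕ) : IsOpen (Cyl z m) := by
  have : Cyl z m = ⋂ i ∈ Finset.range m, (fun w : ℕ → Bool => w i) ⁻¹' {z i} := by
    ext w; simp [Cyl]
  rw [this]
  exact isOpen_biInter_finset fun i _ =>
    (continuous_apply i).isOpen_preimage _ (isOpen_discrete _)

lemma exists_cyl_subset {O : Set (ℕ → Bool)} (hO : IsOpen O) {z : ℕ → Bool} (hz : z ∈ O) :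
    ∃ m, Cyl z m ⊆ O := by
  obtain ⟨I, u, hIu, hsub⟩ := isOpen_pi_iff.mp hO z hz
  refine ⟨(I.sup id) + 1, fun w hw => hsub ?_⟩
  intro a ha
  have : w a = z a := hw a (Nat.lt_succ_of_le (Finset.le_sup (f := id) ha))
  rw [this]; exact (hIu a ha).2

lemma listwise {D : Set (ℕ → Bool)} (hD : IsOpen D) (hDd : Dense D)
    (L : List (ℕ → Bool)) (k : ℕ) :
    ∃ m, k ≤ m ∧ ∃ τ : ℕ → Bool, ∀ σ ∈ L, ∀ w : ℕ → Bool,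
      (∀ i < k, w i = σ i) → (∀ i, k ≤ i → i < m → w i = τ i) → w ∈ D := by
  induction L with
  | nil => exact ⟨k, le_rfl, fun _ => false, by simp⟩
  | cons σ L ih =>
    obtain ⟨m₁, hkm₁, τ₁, hτ₁⟩ := ih
    set p : ℕ → Bool := fun i => if i < k then σ i else τ₁ i with hp
    obtain ⟨z, hzD, hz⟩ := hDd.exists_mem_open (isOpen_Cyl p m₁) ⟨p, self_mem_Cyl p m₁⟩
    obtain ⟨m₂, hm₂⟩ := exists_cyl_subset hD hzD
    refine ⟨max m₁ m₂, le_trans hkm₁ (le_max_left _ _), z, ?_⟩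
    intro σ' hσ' w hwlow hwhigh
    rcases List.mem_cons.mp hσ' with h | h
    · -- σ' = σ : w agrees with z below m₂
      apply hm₂
      intro i him₂
      by_cases hik : i < k
      · rw [hwlow i hik, h, hz i (lt_of_lt_of_le hik hkm₁), hp]
        simp [hik]
      · exact hwhigh i (not_lt.mp hik) (lt_of_lt_of_le him₂ (le_max_right _ _))
    · -- σ' ∈ L : use ih
      refine hτ₁ σ' h w hwlow ?_
      intro i hki him₁
      rw [hwhigh i hki (lt_of_lt_of_le him₁ (le_max_left _ _)), hz i him₁, hp]
      simp [not_lt.mpr hki]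

lemma nwd_step {M : Set (ℕ → Bool)} (hMc : IsClosed M) (hMn : IsNowhereDense M) (k : ℕ) :
    ∃ m, k < m ∧ ∃ τ : ℕ → Bool, ∀ x : Set ℕ,
      (∀ i, k ≤ i → i < m → toCantor x i = τ i) → toCantor x ∉ M := by
  obtain ⟨hDo, hDd⟩ := isClosed_isNowhereDense_iff_compl.mp ⟨hMc, hMn⟩
  set L : List (ℕ → Bool) :=
    (Finset.univ : Finset (Fin k → Bool)).toList.map
      (fun v i => if h : i < k then v ⟨i, h⟩ else false) with hL
  obtain ⟨m, hkm, τ, hτ⟩ := listwise hDo hDd L k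
  refine ⟨m + 1, by omega, τ, ?_⟩
  intro x hx
  have hmem : (fun i => if h : i < k then toCantor x i else false) ∈ L := by
    rw [hL]
    refine List.mem_map.mpr ⟨fun j : Fin k => toCantor x j, Finset.mem_toList.mpr (Finset.mem_univ _), ?_⟩
    funext i
    by_cases h : i < k <;> simp [h]
  have := hτ _ hmem (toCantor x) (fun i hik => by simp [hik])
    (fun i hki him => hx i hki (by omega))
  exact this

lemma closed_nwd_union {X : Type*} [TopologicalSpace X] {A B : Set X}
    (hAc : IsClosed A) (hAn : IsNowhereDense A) (hBc : IsClosed B) (hBn : IsNowhereDense B) :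
    IsClosed (A ∪ B) ∧ IsNowhereDense (A ∪ B) := by
  have hA := isClosed_isNowhereDense_iff_compl.mp ⟨hAc, hAn⟩
  have hB := isClosed_isNowhereDense_iff_compl.mp ⟨hBc, hBn⟩
  rw [isClosed_isNowhereDense_iff_compl, compl_union]
  exact ⟨hA.1.inter hB.1, hA.2.inter_of_isOpen_left hB.2 hA.1⟩

lemma closed_nwd_biUnion {X : Type*} [TopologicalSpace X] {g : ℕ → Set X}
    (h : ∀ j, IsClosed (g j) ∧ IsNowhereDense (g j)) (k : ℕ) :
    IsClosed (⋃ j ∈ Finset.range k, g j) ∧ IsNowhereDense (⋃ j ∈ Finset.range k, g j) := by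
  induction k with
  | zero => simp
  | succ k ih =>
    rw [Finset.range_add_one]
    rw [show ((⋃ j ∈ insert k (Finset.range k), g j) = g k ∪ ⋃ j ∈ Finset.range k, g j) by
      simp [Set.biUnion_insert]]
    exact closed_nwd_union (h k).1 (h k).2 ih.1 ih.2

theorem not_meagre {f : Set ℕ → ℝ}
    (h0 : ∀ x, 0 ≤ f x) (h1 : ∀ x, f x ≤ 1)
    (hadd : ∀ x y : Set ℕ, Disjoint x y → f (x ∪ y) = f x + f y)
    (hsing : ∀ n : ℕ, f {n} = 0) (huniv : f Set.univ = 1) :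
    ¬ IsMeagre (toCantor '' {x : Set ℕ | f x = 1}) := by
  intro hm
  obtain ⟨S, hSnwd, hScnt, hScov⟩ := isMeagre_iff_countable_union_isNowhereDense.mp hm
  obtain ⟨gs, hgs⟩ := (hScnt.insert ∅).exists_eq_range (insert_nonempty _ _)
  have hgsnwd : ∀ j, IsNowhereDense (gs j) := by
    intro j
    have hj : gs j ∈ insert ∅ S := by rw [hgs]; exact mem_range_self j
    rcases mem_insert_iff.mp hj with h | h
    · rw [h]; exact isNowhereDense_empty
    · exact hSnwd _ h
  set M : ℕ → Set (ℕ → Bool) := fun k => ⋃ j ∈ Finset.range (k+1), closure (gs j) with hM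
  have hMcn : ∀ k, IsClosed (M k) ∧ IsNowhereDense (M k) :=
    fun k => closed_nwd_biUnion (fun j => ⟨isClosed_closure, (hgsnwd j).closure⟩) (k+1)
  have hMmono : ∀ {k k' : ℕ}, k ≤ k' → M k ⊆ M k' := by
    intro k k' hk w hw
    simp only [hM, mem_iUnion, Finset.mem_range, exists_prop] at hw ⊢
    obtain ⟨j, hj, hwj⟩ := hw
    exact ⟨j, by omega, hwj⟩
  have hMcov : toCantor '' {x : Set ℕ | f x = 1} ⊆ ⋃ k, M k := by
    intro w hw
    obtain ⟨t, ht, hts⟩ := hScov hw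
    have : t ∈ range gs := by rw [← hgs]; exact mem_insert_of_mem _ ht
    obtain ⟨j, rfl⟩ := this
    refine mem_iUnion.mpr ⟨j, ?_⟩
    simp only [hM, mem_iUnion, Finset.mem_range, exists_prop]
    exact ⟨j, by omega, subset_closure hts⟩
  -- the recursive construction of the interval partition
  have step : ∀ k m : ℕ, ∃ p : ℕ × (ℕ → Bool), m < p.1 ∧ ∀ x : Set ℕ,
      (∀ i, m ≤ i → i < p.1 → toCantor x i = p.2 i) → toCantor x ∉ M k := by
    intro k m
    obtain ⟨m', hm', τ, hτ⟩ := nwd_step (hMcn k).1 (hMcn k).2 m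
    exact ⟨(m', τ), hm', hτ⟩
  choose st hst1 hst2 using step
  set seq : ℕ → ℕ × (ℕ → Bool) :=
    fun k => Nat.rec ((0 : ℕ), (fun _ => false : ℕ → Bool)) (fun k ih => st k ih.1) k with hseq
  set nn : ℕ → ℕ := fun k => (seq k).1 with hnn
  set pat : ℕ → ℕ → Bool := fun k => (seq (k+1)).2 with hpat
  have hnn0 : nn 0 = 0 := rfl
  have hnlt : ∀ k, nn k < nn (k+1) := fun k => hst1 k (nn k)
  have hblock : ∀ (k : ℕ) (x : Set ℕ),
      (∀ i, nn k ≤ i → i < nn (k+1) → toCantor x i = pat k i) → toCantor x ∉ M k :=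
    fun k => hst2 k (nn k)
  have hmono : StrictMono nn := strictMono_nat_of_lt_succ hnlt
  set blk : ℕ → ℕ := fun i => Nat.findGreatest (fun k => nn k ≤ i) (i+1) with hblk
  have hblk1 : ∀ i, nn (blk i) ≤ i := by
    intro i
    exact Nat.findGreatest_spec (P := fun k => nn k ≤ i) (n := i + 1) (m := 0)
      (Nat.zero_le _) (by simp [hnn0])
  have hblk2 : ∀ i, i < nn (blk i + 1) := by
    intro i
    by_contra h
    push_neg at h
    have hle : blk i + 1 ≤ nn (blk i + 1) := hmono.le_apply
    have hgr := Nat.findGreatest_is_greatest (P := fun k => nn k ≤ i) (n := i + 1)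
      (k := blk i + 1) (Nat.lt_succ_self _) (by omega)
    exact hgr h
  have hblk_eq : ∀ {k i : ℕ}, nn k ≤ i → i < nn (k+1) → blk i = k := by
    intro k i hki hik
    rcases lt_trichotomy (blk i) k with h | h | h
    · exfalso
      have h2 : nn (blk i + 1) ≤ nn k := hmono.monotone (show blk i + 1 ≤ k by omega)
      have := hblk2 i; omega
    · exact h
    · exfalso
      have h2 : nn (k+1) ≤ nn (blk i) := hmono.monotone (show k + 1 ≤ blk i by omega)
      have := hblk1 i; omega
  set zz : Set ℕ := {i | pat (blk i) i = true} with hzz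
  set SS : Set ℕ → Set ℕ := fun y => blk ⁻¹' y ∪ zz with hSSdef
  have hSS_inter : ∀ {y y' : Set ℕ}, Disjoint y y' → SS y ∩ SS y' = zz := by
    intro y y' hd
    ext i
    have hdd : blk i ∈ y → blk i ∉ y' := fun h => Set.disjoint_left.mp hd h
    simp only [hSSdef, Set.mem_inter_iff, Set.mem_union, Set.mem_preimage]
    tauto
  have hSS_union : ∀ y y' : Set ℕ, SS y ∪ SS y' = SS (y ∪ y') := by
    intro y y'; ext i
    simp only [hSSdef, Set.mem_union, Set.mem_preimage]; tauto
  have hSS_univ : SS univ = univ := by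
    ext i; simp [hSSdef]
  have hSS_empty : SS ∅ = zz := by
    ext i; simp [hSSdef]
  have hz_subset : ∀ y, zz ⊆ SS y := fun y => subset_union_right
  have key : ∀ y : Set ℕ, yᶜ.Infinite → f (SS y) ≠ 1 := by
    intro y hyc h1f
    have hwmem : toCantor (SS y) ∈ toCantor '' {x | f x = 1} := ⟨SS y, h1f, rfl⟩
    obtain ⟨k₀, hk₀⟩ := mem_iUnion.mp (hMcov hwmem)
    obtain ⟨k, hky, hkk₀⟩ := hyc.exists_gt k₀
    refine hblock k (SS y) ?_ (hMmono (le_of_lt hkk₀) hk₀)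
    intro i h1i h2i
    have hbi : blk i = k := hblk_eq h1i h2i
    have hky' : blk i ∉ y := by rw [hbi]; exact hky
    have hiz : i ∈ SS y ↔ i ∈ zz := by
      simp only [hSSdef, Set.mem_union, Set.mem_preimage]
      tauto
    have hzi : i ∈ zz ↔ pat k i = true := by
      simp only [hzz, mem_setOf_eq, hbi]
    have hiff : (i ∈ SS y) ↔ (pat k i = true) := hiz.trans hzi
    by_cases hin : i ∈ SS y
    · rw [hiff.mp hin]
      exact toCantor_eq_true.mpr hin
    · have hf1 : toCantor (SS y) i = false := by
        cases hc : toCantor (SS y) i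
        · rfl
        · exact absurd (toCantor_eq_true.mp hc) hin
      have hf2 : pat k i = false := by
        cases hc : pat k i
        · rfl
        · exact absurd (hiff.mpr hc) hin
      rw [hf1, hf2]
  have hfz_lt : f zz < 1 := by
    have h := key ∅ (by rw [compl_empty]; exact infinite_univ)
    rw [hSS_empty] at h
    exact lt_of_le_of_ne (h1 zz) h
  set T : ℝ := 1 - f zz with hT
  have hT_pos : 0 < T := by rw [hT]; linarith
  set g : Set ℕ → ℝ := fun y => f (SS y) - f zz with hgdef
  have hg_nonneg : ∀ y, 0 ≤ g y := by
    intro y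
    have := f_mono h0 hadd (hz_subset y)
    simp only [hgdef]; linarith
  have hg_add : ∀ y y' : Set ℕ, Disjoint y y' → g (y ∪ y') = g y + g y' := by
    intro y y' hd
    have hie := f_inclexcl hadd (SS y) (SS y')
    rw [hSS_union, hSS_inter hd] at hie
    simp only [hgdef]; linarith
  have hg_univ : g univ = T := by
    simp only [hgdef, hSS_univ, huniv, hT]
  have hg_le : ∀ y, g y ≤ T := by
    intro y
    have h2 := hg_add y yᶜ disjoint_compl_right
    rw [union_compl_self, hg_univ] at h2
    have := hg_nonneg yᶜ; linarith
  have hg_pos : ∀ y : Set ℕ, y.Infinite → 0 < g y := by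
    intro y hy
    have h2 := hg_add y yᶜ disjoint_compl_right
    rw [union_compl_self, hg_univ] at h2
    have h3 : f (SS yᶜ) < 1 := lt_of_le_of_ne (h1 _) (key yᶜ (by rwa [compl_compl]))
    have h4 : g yᶜ < T := by simp only [hgdef, hT]; linarith
    linarith
  have hblk_fin : ∀ e : Set ℕ, e.Finite → (blk ⁻¹' e).Finite := by
    intro e he
    have hsub : blk ⁻¹' e ⊆ ⋃ k ∈ e, Set.Iio (nn (k+1)) := by
      intro i hi
      exact mem_biUnion hi (hblk2 i)
    exact (he.biUnion (fun k _ => finite_Iio (nn (k+1)))).subset hsub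
  have hg_congr : ∀ y y' : Set ℕ, (symmDiff y y').Finite → g y = g y' := by
    intro y y' hfin
    have hsub : symmDiff (SS y) (SS y') ⊆ blk ⁻¹' (symmDiff y y') := by
      intro i hi
      rw [Set.mem_symmDiff] at hi
      rw [mem_preimage, Set.mem_symmDiff]
      simp only [hSSdef, Set.mem_union, Set.mem_preimage] at hi
      tauto
    have := f_congr_finite hadd hsing ((hblk_fin _ hfin).subset hsub)
    simp only [hgdef, this]
  -- the almost disjoint family
  set A : ℝ → Set ℕ :=
    fun x => Set.range (fun q : ℕ => Encodable.encode ((q+1 : ℕ), ⌊(q+1 : ℝ) * x⌋)) with hA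
  have hA_inf : ∀ x, (A x).Infinite := by
    intro x
    apply Set.infinite_range_of_injective
    intro a b hab
    have h2 := Encodable.encode_injective hab
    simpa using congrArg Prod.fst h2
  have hA_ad : ∀ x y : ℝ, x ≠ y → (A x ∩ A y).Finite := by
    intro x y hxy
    have hd : 0 < |x - y| := abs_pos.mpr (sub_ne_zero.mpr hxy)
    obtain ⟨N, hN⟩ := exists_nat_gt (1 / |x - y|)
    have hsub : A x ∩ A y ⊆
        (fun q : ℕ => Encodable.encode ((q+1 : ℕ), ⌊(q+1 : ℝ) * x⌋)) '' (Set.Iio N) := by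
      rintro nvals ⟨⟨q, rfl⟩, ⟨q', hq'⟩⟩
      refine ⟨q, ?_, rfl⟩
      have hpq := Encodable.encode_injective hq'
      have hq : q' = q := by simpa using congrArg Prod.fst hpq
      subst hq
      have hfl : ⌊(q'+1 : ℝ) * y⌋ = ⌊(q'+1 : ℝ) * x⌋ := by
        simpa using congrArg Prod.snd hpq
      have habs : |(q'+1 : ℝ) * y - (q'+1 : ℝ) * x| < 1 :=
        Int.abs_sub_lt_one_of_floor_eq_floor hfl
      rw [← mul_sub, abs_mul, abs_of_pos (by positivity), abs_sub_comm y x] at habs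
      have hlt : (q'+1 : ℝ) < 1 / |x - y| := by
        rw [lt_div_iff₀ hd]; exact habs
      have : (q' : ℝ) + 1 < N := lt_trans hlt hN
      have : (q' : ℝ) < N := by linarith
      exact_mod_cast this
    exact ((Set.finite_Iio N).image _).subset hsub
  -- pigeonhole
  have hcover : ∀ x : ℝ, ∃ n : ℕ, 1 / (n + 1 : ℝ) ≤ g (A x) := by
    intro x
    obtain ⟨n, hn⟩ := exists_nat_one_div_lt (hg_pos _ (hA_inf x))
    exact ⟨n, le_of_lt hn⟩
  have huncnt : ∃ n : ℕ, ¬ ({x : ℝ | 1 / (n + 1 : ℝ) ≤ g (A x)}).Countable := by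
    by_contra hc
    push_neg at hc
    apply Cardinal.not_countable_real
    have hsub : (univ : Set ℝ) ⊆ ⋃ n : ℕ, {x : ℝ | 1 / (n + 1 : ℝ) ≤ g (A x)} :=
      fun x _ => mem_iUnion.mpr (hcover x)
    exact Set.Countable.mono hsub (countable_iUnion hc)
  obtain ⟨n, hn⟩ := huncnt
  have hinf : ({x : ℝ | 1 / (n + 1 : ℝ) ≤ g (A x)}).Infinite := by
    intro hfin; exact hn hfin.countable
  obtain ⟨t, hts, htc⟩ := hinf.exists_subset_card_eq (n + 2)
  set e : Fin (n+2) → ℝ := fun i => ((Finset.equivFinOfCardEq htc).symm i : ℝ) with he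
  have he_inj : Function.Injective e :=
    fun a b hab => (Equiv.injective _) (Subtype.coe_injective hab)
  have he_mem : ∀ i, 1 / (n + 1 : ℝ) ≤ g (A (e i)) :=
    fun i => hts ((Finset.equivFinOfCardEq htc).symm i).2
  set AD : ℕ → Set ℕ := fun i => if h : i < n + 2 then A (e ⟨i, h⟩) else ∅ with hAD
  have hAD_fin : ∀ {i j : ℕ}, i < n+2 → j < n+2 → i ≠ j → (AD i ∩ AD j).Finite := by
    intro i j hi hj hij
    simp only [hAD, dif_pos hi, dif_pos hj]
    apply hA_ad
    intro hxy
    have h2 : (⟨i, hi⟩ : Fin (n+2)) = ⟨j, hj⟩ := he_inj hxy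
    exact hij (by simpa using congrArg Fin.val h2)
  set D : ℕ → Set ℕ := fun i => AD i \ ⋃ j ∈ Finset.range i, AD j with hD
  have hD_sub : ∀ i, D i ⊆ AD i := fun i => diff_subset
  have hD_disj : ∀ {i j : ℕ}, i < j → Disjoint (D i) (D j) := by
    intro i j hij
    rw [Set.disjoint_left]
    intro a hai haj
    have h2 : a ∉ AD i := by
      intro hin
      exact haj.2 (mem_biUnion (Finset.mem_range.mpr hij) hin)
    exact h2 (hD_sub i hai)
  have hg_D : ∀ i : ℕ, i < n + 2 → 1 / (n+1 : ℝ) ≤ g (D i) := by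
    intro i hi
    have hfin : (symmDiff (D i) (AD i)).Finite := by
      have hsub : symmDiff (D i) (AD i) ⊆ ⋃ j ∈ Finset.range i, (AD i ∩ AD j) := by
        intro a ha
        rw [Set.mem_symmDiff] at ha
        rcases ha with ⟨ha1, ha2⟩ | ⟨ha1, ha2⟩
        · exact absurd (hD_sub _ ha1) ha2
        · simp only [hD, mem_diff, not_and, not_not] at ha2
          have := ha2 ha1
          simp only [mem_iUnion, exists_prop] at this
          obtain ⟨j, hj, haj⟩ := this
          exact mem_biUnion hj ⟨ha1, haj⟩
      refine (Set.Finite.biUnion (Finset.range i).finite_toSet ?_).subset hsub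
      intro j hj
      have hji : j < i := Finset.mem_range.mp hj
      exact hAD_fin hi (by omega) (by omega)
    have hco := hg_congr _ _ hfin
    rw [hco]
    have : AD i = A (e ⟨i, hi⟩) := by simp only [hAD, dif_pos hi]
    rw [this]
    exact he_mem _
  have hsum : ∀ k : ℕ, (Finset.range k).sum (fun i => g (D i)) =
      g (⋃ i ∈ Finset.range k, D i) := by
    intro k
    induction k with
    | zero =>
      have h2 : (⋃ i ∈ Finset.range 0, D i) = (∅ : Set ℕ) := by simp
      rw [h2, Finset.range_zero, Finset.sum_empty]
      have h3 : g ∅ = 0 := by simp only [hgdef]; rw [hSS_empty]; ring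
      rw [h3]
    | succ k ih =>
      have hdisj : Disjoint (⋃ i ∈ Finset.range k, D i) (D k) := by
        rw [Set.disjoint_left]
        intro a ha hak
        simp only [mem_iUnion, exists_prop] at ha
        obtain ⟨i, hi, hai⟩ := ha
        exact Set.disjoint_left.mp (hD_disj (Finset.mem_range.mp hi)) hai hak
      rw [Finset.sum_range_succ, Finset.range_add_one]
      rw [show (⋃ i ∈ insert k (Finset.range k), D i)
            = (⋃ i ∈ Finset.range k, D i) ∪ D k from by
        rw [Finset.set_biUnion_insert]; exact union_comm _ _]
      rw [hg_add _ _ hdisj, ih]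
  -- final contradiction
  have hfinal : (n + 2 : ℝ) * (1 / (n+1 : ℝ)) ≤ g (⋃ i ∈ Finset.range (n+2), D i) := by
    rw [← hsum]
    calc (n + 2 : ℝ) * (1 / (n+1 : ℝ))
        = (Finset.range (n+2)).sum (fun _ => 1 / (n+1 : ℝ)) := by
          rw [Finset.sum_const, Finset.card_range, nsmul_eq_mul]; push_cast; ring
      _ ≤ (Finset.range (n+2)).sum (fun i => g (D i)) := by
          apply Finset.sum_le_sum
          intro i hi
          exact hg_D i (Finset.mem_range.mp hi)
  have hle1 : g (⋃ i ∈ Finset.range (n+2), D i) ≤ T := hg_le _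
  have hTle : T ≤ 1 := by
    rw [hT]; have := h0 zz; linarith
  have hgt : (1 : ℝ) < (n + 2 : ℝ) * (1 / (n+1 : ℝ)) := by
    rw [mul_one_div, lt_div_iff₀ (by positivity : (0:ℝ) < (n:ℝ)+1)]
    norm_num
  have hfin2 : (1:ℝ) < T := lt_of_lt_of_le hgt (le_trans hfinal hle1)
  exact absurd hfin2 (not_lt.mpr hTle)

lemma meagre_union {X : Type*} [TopologicalSpace X] {s t : Set X}
    (hs : IsMeagre s) (ht : IsMeagre t) : IsMeagre (s ∪ t) := by
  rw [IsMeagre, compl_union]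
  exact Filter.inter_mem hs ht

lemma open_nonempty_not_meagre {O : Set (ℕ → Bool)} (hO : IsOpen O) (hne : O.Nonempty) :
    ¬ IsMeagre O := by
  intro h
  have hd : Dense Oᶜ := dense_of_mem_residual h
  obtain ⟨y, hy1, hy2⟩ := hd.exists_mem_open hO hne
  exact hy1 hy2

/-- flip all coordinates from `m` on -/
def flipAbove (m : ℕ) : (ℕ → Bool) → (ℕ → Bool) := fun w i => if i < m then w i else !(w i)

lemma flipAbove_invol (m : ℕ) (w : ℕ → Bool) : flipAbove m (flipAbove m w) = w := by
  funext i
  by_cases h : i < m <;> simp [flipAbove, h]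

lemma flipAbove_continuous (m : ℕ) : Continuous (flipAbove m) := by
  apply continuous_pi
  intro i
  by_cases h : i < m
  · simpa [flipAbove, h] using continuous_apply i
  · simp only [flipAbove, if_neg h]
    exact (continuous_of_discreteTopology (f := fun b : Bool => !b)).comp (continuous_apply i)

lemma flipAbove_isOpenMap (m : ℕ) : IsOpenMap (flipAbove m) := by
  intro O hO
  have : flipAbove m '' O = flipAbove m ⁻¹' O := by
    ext w
    constructor
    · rintro ⟨v, hv, rfl⟩; rwa [mem_preimage, flipAbove_invol]
    · intro hw; exact ⟨flipAbove m w, hw, flipAbove_invol m w⟩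
  rw [this]
  exact hO.preimage (flipAbove_continuous m)

theorem not_baire {f : Set ℕ → ℝ}
    (h0 : ∀ x, 0 ≤ f x) (h1 : ∀ x, f x ≤ 1)
    (hadd : ∀ x y : Set ℕ, Disjoint x y → f (x ∪ y) = f x + f y)
    (hsing : ∀ n : ℕ, f {n} = 0) (huniv : f Set.univ = 1) :
    ¬ HasBaireProperty (toCantor '' {x : Set ℕ | f x = 1}) := by
  rintro ⟨U, hU, hsy⟩
  set F := toCantor '' {x : Set ℕ | f x = 1} with hF
  rcases eq_empty_or_nonempty U with rfl | ⟨u, hu⟩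
  · apply not_meagre h0 h1 hadd hsing huniv
    have he : symmDiff F ∅ = F := by rw [symmDiff_def]; simp
    rwa [he] at hsy
  · obtain ⟨m, hcyl⟩ := exists_cyl_subset hU hu
    have h1m : IsMeagre (Cyl u m \ F) := by
      refine hsy.mono fun w hw => ?_
      rw [Set.mem_symmDiff]
      exact Or.inr ⟨hcyl hw.1, hw.2⟩
    have h2m : IsMeagre (flipAbove m ⁻¹' (Cyl u m \ F)) :=
      h1m.preimage_of_isOpenMap (flipAbove_continuous m) (flipAbove_isOpenMap m)
    have hflip_cyl : ∀ w, w ∈ Cyl u m → flipAbove m w ∈ Cyl u m := by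
      intro w hw i hi
      simp only [flipAbove, if_pos hi]
      exact hw i hi
    have hdecomp : Cyl u m ⊆ ((Cyl u m \ F) ∪ (flipAbove m ⁻¹' (Cyl u m \ F)))
        ∪ (F ∩ flipAbove m ⁻¹' F ∩ Cyl u m) := by
      intro w hw
      by_cases h1w : w ∈ F
      · by_cases h2w : flipAbove m w ∈ F
        · exact Or.inr ⟨⟨h1w, h2w⟩, hw⟩
        · exact Or.inl (Or.inr ⟨hflip_cyl w hw, h2w⟩)
      · exact Or.inl (Or.inl ⟨hw, h1w⟩)
    have hne : (F ∩ flipAbove m ⁻¹' F ∩ Cyl u m).Nonempty := by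
      by_contra hne
      rw [not_nonempty_iff_eq_empty] at hne
      apply open_nonempty_not_meagre (isOpen_Cyl u m) ⟨u, self_mem_Cyl u m⟩
      refine (meagre_union h1m h2m).mono ?_
      intro w hw
      rcases hdecomp hw with h | h
      · exact h
      · rw [hne] at h; exact absurd h (notMem_empty w)
    obtain ⟨w, ⟨⟨hwF, hwF'⟩, _⟩⟩ := hne
    obtain ⟨a, ha, haw⟩ := hwF
    obtain ⟨b, hb, hbw⟩ := hwF'
    have hab : a ∩ b ⊆ Set.Iio m := by
      intro i hi
      by_contra him
      rw [Set.mem_Iio, not_lt] at him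
      have h2 : toCantor a i = true := toCantor_eq_true.mpr hi.1
      have h3 : toCantor b i = true := toCantor_eq_true.mpr hi.2
      have h4 : toCantor b i = !(toCantor a i) := by
        rw [haw, hbw]
        simp [flipAbove, not_lt.mpr him]
      rw [h2, h3] at h4
      simp at h4
    have hie := f_inclexcl hadd a b
    have hfab : f (a ∩ b) = 0 := f_finite hadd hsing ((Set.finite_Iio m).subset hab)
    have hle : f (a ∪ b) ≤ 1 := h1 _
    have ha1 : f a = 1 := ha
    have hb1 : f b = 1 := hb
    linarith

end MedialAux

/-- If `f` is a medial limit then the filter `F = {x | f x = 1}` does not have the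
property of Baire; in particular it is nonmeager. -/
theorem stmt_14 (f : Set ℕ → ℝ) (hf : IsMedialLimit f) :
    ¬ HasBaireProperty (toCantor '' {x : Set ℕ | f x = 1}) ∧
      ¬ IsMeagre (toCantor '' {x : Set ℕ | f x = 1}) := by
  obtain ⟨hmem, _hUM, hadd, hsing, huniv⟩ := hf
  have h0 : ∀ x, 0 ≤ f x := fun x => (hmem x).1
  have h1 : ∀ x, f x ≤ 1 := fun x => (hmem x).2
  exact ⟨MedialAux.not_baire h0 h1 hadd hsing huniv,
    MedialAux.not_meagre h0 h1 hadd hsing huniv⟩
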